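/- For every a ∈ B, ∂( exp(ad r)(a) ) = exp(ad r)(∂(a)) + { c , exp(ad r)(a) }, where exp(ad r)(a) := Σ_{k=0}^{N−1} ad(r)^k(a)/k! and c := Σ_{n=0}^{N−1} ad(r)^n(∂(r))/(n+1)!. -/
import Mathlib

open Finset

/-- `∂(exp(ad r)(a)) = exp(ad r)(∂(a)) + {c, exp(ad r)(a)}`, where
`exp(ad r)(a) = Σ_{k<N} ad(r)^k(a)/k!` and `c = Σ_{n<N} ad(r)^n(∂ r)/(n+1)!`. -/
theorem partial_exp_ad
    (B : Type*) [CommRing B] [Algebra ℚ B]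
    (p : B →ₗ[ℚ] B) (br : B →ₗ[ℚ] B →ₗ[ℚ] B)
    (r : B) (adr : Module.End ℚ B) (hadr : ∀ x : B, adr x = br r x)
    (hder : ∀ x : B, p (br r x) = br (p r) x + br r (p x))
    (hjac : ∀ u v : B, br r (br u v) = br (br r u) v + br u (br r v))
    (N : ℕ) (hN : adr ^ N = 0) :
    ∀ a : B,
      p (∑ k ∈ Finset.range N, ((k.factorial : ℚ))⁻¹ • (adr ^ k) a)
        = (∑ k ∈ Finset.range N, ((k.factorial : ℚ))⁻¹ • (adr ^ k) (p a))
          + br (∑ n ∈ Finset.range N, (((n + 1).factorial : ℚ))⁻¹ • (adr ^ n) (p r))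
              (∑ k ∈ Finset.range N, ((k.factorial : ℚ))⁻¹ • (adr ^ k) a) := by
  intro a
  -- vanishing of high powers
  have hvan : ∀ k, N ≤ k → ∀ x : B, (adr ^ k) x = 0 := by
    intro k hk x
    have h : adr ^ k = adr ^ (k - N) * adr ^ N := by
      rw [← pow_add]; congr 1; omega
    rw [h, Module.End.mul_apply, hN]
    simp
  set M := 2 * N with hM
  -- extension of the sums from N to M
  have hext : ∀ x : B, ∑ k ∈ range N, ((k.factorial : ℚ))⁻¹ • (adr ^ k) x
      = ∑ k ∈ range M, ((k.factorial : ℚ))⁻¹ • (adr ^ k) x := by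
    intro x
    refine Finset.sum_subset (Finset.range_subset_range.2 (by omega)) ?_
    intro k _ hk
    rw [hvan k (by simpa using hk) x, smul_zero]
  have hextc : ∑ n ∈ range N, (((n + 1).factorial : ℚ))⁻¹ • (adr ^ n) (p r)
      = ∑ n ∈ range M, (((n + 1).factorial : ℚ))⁻¹ • (adr ^ n) (p r) := by
    refine Finset.sum_subset (Finset.range_subset_range.2 (by omega)) ?_
    intro n _ hn
    rw [hvan n (by simpa using hn) (p r), smul_zero]
  rw [hext a, hext (p a), hextc]
  -- the adjoint action on endomorphisms
  set AD : Module.End ℚ (Module.End ℚ B) :=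
    LinearMap.mulLeft ℚ adr - LinearMap.mulRight ℚ adr with hAD
  have hADapp : ∀ (L : Module.End ℚ B) (x : B), (AD L) x = adr (L x) - L (adr x) := by
    intro L x
    simp [hAD, LinearMap.sub_apply, LinearMap.mulLeft_apply, LinearMap.mulRight_apply,
      Module.End.mul_apply]
  -- br (adr u) = AD (br u)
  have hbrA : ∀ u : B, br (adr u) = AD (br u) := by
    intro u
    ext v
    rw [hADapp, hadr u, hadr (br u v), hadr v, hjac u v]
    ring
  -- br (adr^n u) = AD^n (br u)
  have hbr_pow : ∀ (n : ℕ) (u : B), br ((adr ^ n) u) = (AD ^ n) (br u) := by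
    intro n
    induction n with
    | zero => intro u; simp
    | succ n ih =>
      intro u
      have h1 : (adr ^ (n + 1)) u = adr ((adr ^ n) u) := by
        rw [pow_succ', Module.End.mul_apply]
      have h2 : (AD ^ (n + 1)) (br u) = AD ((AD ^ n) (br u)) := by
        rw [pow_succ', Module.End.mul_apply]
      rw [h1, hbrA, ih, h2]
  set Cn : ℕ → Module.End ℚ B := fun n => (AD ^ n) (br (p r)) with hCn
  have hCnbr : ∀ n, Cn n = br ((adr ^ n) (p r)) := by
    intro n; rw [hCn]; exact (hbr_pow n (p r)).symm
  have hCnvan : ∀ n, N ≤ n → Cn n = 0 := by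
    intro n hn
    rw [hCnbr, hvan n hn (p r), map_zero]
  have hCnzero : Cn 0 = br (p r) := by rw [hCn]; simp
  have hCnstep : ∀ (n : ℕ) (y : B), adr (Cn n y) = Cn (n + 1) y + Cn n (adr y) := by
    intro n y
    have h2 : Cn (n + 1) = AD (Cn n) := by
      rw [hCn]; simp only; rw [pow_succ', Module.End.mul_apply]
    rw [h2, hADapp]
    ring
  have hpA : ∀ x : B, p (adr x) = br (p r) x + adr (p x) := by
    intro x; rw [hadr, hder, hadr]
  have h1' : ∀ (j : ℕ) (y : B), adr ((adr ^ j) y) = (adr ^ (j + 1)) y := by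
    intro j y; rw [pow_succ', Module.End.mul_apply]
  -- key commutator formula, by induction using Pascal's rule only
  have star : ∀ (m : ℕ) (x : B), p ((adr ^ m) x) = (adr ^ m) (p x)
      + ∑ n ∈ range m, ((m.choose (n + 1) : ℚ)) • (Cn n) ((adr ^ (m - 1 - n)) x) := by
    intro m
    induction m with
    | zero => intro x; simp
    | succ m ih =>
      intro x
      have lhs : p ((adr ^ (m + 1)) x)
          = br (p r) ((adr ^ m) x) + (adr ^ (m + 1)) (p x)
            + (∑ n ∈ range m, ((m.choose (n + 1) : ℚ)) • Cn (n + 1) ((adr ^ (m - 1 - n)) x)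
              + ∑ n ∈ range m, ((m.choose (n + 1) : ℚ)) • Cn n ((adr ^ (m - n)) x)) := by
        rw [← h1' m x, hpA, ih, map_add, map_sum, h1' m (p x), ← Finset.sum_add_distrib,
          add_assoc]
        congr 2
        refine Finset.sum_congr rfl fun n hn => ?_
        have hn' : n < m := Finset.mem_range.1 hn
        rw [map_smul, hCnstep, h1']
        have he : m - 1 - n + 1 = m - n := by omega
        rw [he, smul_add]
      have rhs : ∑ n ∈ range (m + 1), (((m + 1).choose (n + 1) : ℚ))
            • Cn n ((adr ^ (m + 1 - 1 - n)) x)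
          = br (p r) ((adr ^ m) x)
            + (∑ n ∈ range m, ((m.choose (n + 1) : ℚ)) • Cn (n + 1) ((adr ^ (m - 1 - n)) x)
              + ∑ n ∈ range m, ((m.choose (n + 1) : ℚ)) • Cn n ((adr ^ (m - n)) x)) := by
        have hstep : ∀ n, (((m + 1).choose (n + 1) : ℚ)) • Cn n ((adr ^ (m + 1 - 1 - n)) x)
            = ((m.choose n : ℚ)) • Cn n ((adr ^ (m - n)) x)
              + ((m.choose (n + 1) : ℚ)) • Cn n ((adr ^ (m - n)) x) := by
          intro n
          have he : m + 1 - 1 - n = m - n := by omega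
          rw [he, Nat.choose_succ_succ]
          push_cast
          rw [add_smul]
        rw [Finset.sum_congr rfl fun n _ => hstep n, Finset.sum_add_distrib]
        have hA : ∑ n ∈ range (m + 1), ((m.choose n : ℚ)) • Cn n ((adr ^ (m - n)) x)
            = (∑ n ∈ range m, ((m.choose (n + 1) : ℚ)) • Cn (n + 1) ((adr ^ (m - 1 - n)) x))
              + br (p r) ((adr ^ m) x) := by
          rw [Finset.sum_range_succ']
          congr 1
          · refine Finset.sum_congr rfl fun n hn => ?_
            have he : m - (n + 1) = m - 1 - n := by omega
            rw [he]
          · rw [hCnzero]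
            simp
        have hB : ∑ n ∈ range (m + 1), ((m.choose (n + 1) : ℚ)) • Cn n ((adr ^ (m - n)) x)
            = ∑ n ∈ range m, ((m.choose (n + 1) : ℚ)) • Cn n ((adr ^ (m - n)) x) := by
          rw [Finset.sum_range_succ, Nat.choose_succ_self]
          simp
        rw [hA, hB]
        abel
      rw [lhs, rhs]
      abel
  -- expand the left-hand side
  have LHS1 : p (∑ k ∈ range M, ((k.factorial : ℚ))⁻¹ • (adr ^ k) a)
      = (∑ k ∈ range M, ((k.factorial : ℚ))⁻¹ • (adr ^ k) (p a))
        + ∑ k ∈ range M, ∑ n ∈ range k,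
            (((n + 1).factorial : ℚ))⁻¹ • (((k - 1 - n).factorial : ℚ))⁻¹
              • Cn n ((adr ^ (k - 1 - n)) a) := by
    rw [map_sum, ← Finset.sum_add_distrib]
    refine Finset.sum_congr rfl fun k _ => ?_
    rw [map_smul, star k a, smul_add, Finset.smul_sum]
    congr 1
    refine Finset.sum_congr rfl fun n hn => ?_
    have hn' : n + 1 ≤ k := Finset.mem_range.1 hn
    rw [smul_smul, smul_smul]
    congr 1
    rw [Nat.cast_choose ℚ hn']
    have he : k - (n + 1) = k - 1 - n := by omega
    rw [he]
    have h1 : ((k.factorial : ℚ)) ≠ 0 := Nat.cast_ne_zero.2 (Nat.factorial_ne_zero k)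
    have h2 : (((n + 1).factorial : ℚ)) ≠ 0 := Nat.cast_ne_zero.2 (Nat.factorial_ne_zero _)
    have h3 : (((k - 1 - n).factorial : ℚ)) ≠ 0 := Nat.cast_ne_zero.2 (Nat.factorial_ne_zero _)
    field_simp
  -- expand the bracket term on the right-hand side
  have RHS1 : br (∑ n ∈ range M, (((n + 1).factorial : ℚ))⁻¹ • (adr ^ n) (p r))
        (∑ k ∈ range M, ((k.factorial : ℚ))⁻¹ • (adr ^ k) a)
      = ∑ n ∈ range M, ∑ k ∈ range M,
          (((n + 1).factorial : ℚ))⁻¹ • ((k.factorial : ℚ))⁻¹ • Cn n ((adr ^ k) a) := by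
    have hb : br (∑ n ∈ range M, (((n + 1).factorial : ℚ))⁻¹ • (adr ^ n) (p r))
        = ∑ n ∈ range M, (((n + 1).factorial : ℚ))⁻¹ • Cn n := by
      rw [map_sum]
      refine Finset.sum_congr rfl fun n _ => ?_
      rw [map_smul, hCnbr]
    rw [hb, LinearMap.sum_apply]
    refine Finset.sum_congr rfl fun n _ => ?_
    rw [LinearMap.smul_apply, map_sum, Finset.smul_sum]
    refine Finset.sum_congr rfl fun k _ => ?_
    rw [map_smul]
  -- the double-sum reindexing
  have main : ∑ k ∈ range M, ∑ n ∈ range k,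
        (((n + 1).factorial : ℚ))⁻¹ • (((k - 1 - n).factorial : ℚ))⁻¹
          • Cn n ((adr ^ (k - 1 - n)) a)
      = ∑ n ∈ range M, ∑ k ∈ range M,
          (((n + 1).factorial : ℚ))⁻¹ • ((k.factorial : ℚ))⁻¹ • Cn n ((adr ^ k) a) := by
    have hzero : ∀ n j : ℕ, N ≤ n ∨ N ≤ j →
        (((n + 1).factorial : ℚ))⁻¹ • ((j.factorial : ℚ))⁻¹ • Cn n ((adr ^ j) a) = 0 := by
      intro n j h
      rcases h with h | h
      · rw [hCnvan n h]
        simp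
      · rw [hvan j h a, map_zero, smul_zero, smul_zero]
    rw [Finset.sum_comm' (s' := fun n => Finset.Ico (n + 1) M) (t' := range M)
      (by intro k n; simp only [Finset.mem_range, Finset.mem_Ico]; omega)]
    refine Finset.sum_congr rfl fun n hn => ?_
    rw [Finset.sum_Ico_eq_sum_range]
    have hre : ∀ j ∈ range (M - (n + 1)),
        (((n + 1).factorial : ℚ))⁻¹ • (((n + 1 + j - 1 - n).factorial : ℚ))⁻¹
            • Cn n ((adr ^ (n + 1 + j - 1 - n)) a)
          = (((n + 1).factorial : ℚ))⁻¹ • ((j.factorial : ℚ))⁻¹ • Cn n ((adr ^ j) a) := by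
      intro j _
      have he : n + 1 + j - 1 - n = j := by omega
      rw [he]
    rw [Finset.sum_congr rfl hre]
    refine Finset.sum_subset (Finset.range_subset_range.2 (by omega)) ?_
    intro j hj hj'
    have hjM : j < M := Finset.mem_range.1 hj
    have hjlo : M - (n + 1) ≤ j := by simpa using hj'
    rcases le_or_gt N n with h | h
    · exact hzero n j (Or.inl h)
    · refine hzero n j (Or.inr (by omega))
  rw [LHS1, RHS1, main]
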